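/- Let Σ be a finite alphabet, let π_1,…,π_q be probability distributions on Σ (a weighted text T of length q), and let z ≥ 1 be a real number. Then the number of maximal matching suffixes of T[1,q] with respect to the threshold 1/(2z) is at most 2z. -/

import Mathlib

/-- The probability that a string `S` (of length `ℓ ≤ q`) matches the last `ℓ`
positions `T[q−ℓ+1, q]` of a weighted text `T` given by distributions
`π_1, …, π_q`: the product `∏_{i=1}^{ℓ} π_{q−ℓ+i}(S[i])`. -/
def matchProb {A : Type*} (π : ℕ → A → ℝ) (q : ℕ) (S : List A) : ℝ :=
  ∏ i : Fin S.length, π (q - S.length + i.1 + 1) (S.get i)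

/-- `S` is a maximal matching suffix of `T[1,q]` with respect to the threshold
`1/(2z)`: `S` matches `T[q−|S|+1, q]` with probability at least `1/(2z)`, and
either `|S| = q` or every one-letter extension `aS` matches `T[q−|S|, q]` with
probability less than `1/(2z)`. -/
def IsMaxMatchingSuffix {A : Type*} (π : ℕ → A → ℝ) (q : ℕ) (z : ℝ)
    (S : List A) : Prop :=
  S.length ≤ q ∧ 1 / (2 * z) ≤ matchProb π q S ∧
    (S.length = q ∨ ∀ a : A, matchProb π q (a :: S) < 1 / (2 * z))

lemma matchProb_nonneg {A : Type*} (π : ℕ → A → ℝ) (q : ℕ)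
    (hnonneg : ∀ i, 1 ≤ i → i ≤ q → ∀ a, 0 ≤ π i a)
    (S : List A) (hS : S.length ≤ q) : 0 ≤ matchProb π q S := by
  apply Finset.prod_nonneg
  intro i _
  exact hnonneg _ (by omega) (by have := i.2; omega) _

lemma matchProb_le_one {A : Type*} [Fintype A] (π : ℕ → A → ℝ) (q : ℕ)
    (hnonneg : ∀ i, 1 ≤ i → i ≤ q → ∀ a, 0 ≤ π i a)
    (hsum : ∀ i, 1 ≤ i → i ≤ q → ∑ a, π i a = 1)
    (S : List A) (hS : S.length ≤ q) : matchProb π q S ≤ 1 := by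
  apply Finset.prod_le_one
  · intro i _
    exact hnonneg _ (by omega) (by have := i.2; omega) _
  · intro i _
    have h1 : (1:ℕ) ≤ q - S.length + i.1 + 1 := by omega
    have h2 : q - S.length + i.1 + 1 ≤ q := by have := i.2; omega
    calc π (q - S.length + i.1 + 1) (S.get i)
        ≤ ∑ a, π (q - S.length + i.1 + 1) a :=
          Finset.single_le_sum (fun a _ => hnonneg _ h1 h2 a) (Finset.mem_univ _)
      _ = 1 := hsum _ h1 h2

lemma matchProb_cons {A : Type*} (π : ℕ → A → ℝ) (q : ℕ) (a : A) (S : List A)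
    (h : S.length < q) :
    matchProb π q (a :: S) = π (q - S.length) a * matchProb π q S := by
  have key : matchProb π q (a :: S)
      = ∏ i : Fin (S.length + 1), π (q - (S.length + 1) + i.1 + 1) ((a :: S).get i) := rfl
  rw [key, Fin.prod_univ_succ]
  congr 1
  · congr 1
    simp only [Fin.val_zero]
    omega
  · apply Finset.prod_congr rfl
    intro i _
    have hget : ((a :: S).get i.succ) = S.get i := by simp
    rw [hget]
    congr 1
    simp only [Fin.val_succ]
    omega

lemma matchProb_append {A : Type*} (π : ℕ → A → ℝ) (q : ℕ) (P S : List A)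
    (h : P.length + S.length ≤ q) :
    matchProb π q (P ++ S) = matchProb π (q - S.length) P * matchProb π q S := by
  induction P with
  | nil =>
      simp [matchProb]
  | cons a P ih =>
      have hlen : (P ++ S).length = P.length + S.length := List.length_append
      have h1 : (P ++ S).length < q := by simp at h ⊢; omega
      rw [List.cons_append, matchProb_cons π q a (P ++ S) h1,
        ih (by simp at h ⊢; omega),
        matchProb_cons π (q - S.length) a P (by omega), hlen]
      have : q - (P.length + S.length) = q - S.length - P.length := by omega
      rw [this, mul_assoc]

lemma matchProb_ofFn {A : Type*} (π : ℕ → A → ℝ) (m : ℕ) (f : Fin m → A) :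
    matchProb π m (List.ofFn f) = ∏ i : Fin m, π (i.1 + 1) (f i) := by
  unfold matchProb
  rw [← Fin.prod_congr' _ (List.length_ofFn (f := f)).symm]
  apply Finset.prod_congr rfl
  intro i _
  rw [List.get_ofFn]
  simp [List.length_ofFn]

lemma sum_matchProb_ofFn {A : Type*} [Fintype A] (π : ℕ → A → ℝ) (m : ℕ)
    (hsum : ∀ i, 1 ≤ i → i ≤ m → ∑ a, π i a = 1) :
    ∑ f : Fin m → A, matchProb π m (List.ofFn f) = 1 := by
  simp only [matchProb_ofFn]
  rw [← Fintype.piFinset_univ,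
    Finset.sum_prod_piFinset Finset.univ (fun (i : Fin m) a => π (i.1+1) a)]
  apply Finset.prod_eq_one
  intro i _
  exact hsum _ (by omega) (by have := i.2; omega)

theorem card_maximal_matching_suffixes_le
    {A : Type*} [Fintype A] (q : ℕ) (π : ℕ → A → ℝ) (z : ℝ)
    (hnonneg : ∀ i, 1 ≤ i → i ≤ q → ∀ a, 0 ≤ π i a)
    (hsum : ∀ i, 1 ≤ i → i ≤ q → ∑ a, π i a = 1)
    (hz : 1 ≤ z) :
    {S : List A | IsMaxMatchingSuffix π q z S}.Finite ∧
      ({S : List A | IsMaxMatchingSuffix π q z S}.ncard : ℝ) ≤ 2 * z := by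
  classical
  have hz0 : (0:ℝ) < 2 * z := by linarith
  have hfin : {S : List A | IsMaxMatchingSuffix π q z S}.Finite :=
    (List.finite_length_le A q).subset (fun S hS => hS.1)
  refine ⟨hfin, ?_⟩
  set MF := hfin.toFinset with hMFdef
  have hmem : ∀ S, S ∈ MF ↔ IsMaxMatchingSuffix π q z S := by
    intro S; rw [hMFdef, Set.Finite.mem_toFinset]; rfl
  -- the set of maximal matching suffixes is an antichain under the suffix order
  have anti : ∀ S ∈ MF, ∀ S' ∈ MF, S <:+ S' → S = S' := by
    intro S hS S' hS' hsuf
    obtain ⟨P, rfl⟩ := hsuf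
    rw [hmem] at hS hS'
    obtain ⟨hlen, hprob, hmax⟩ := hS
    obtain ⟨hlen', hprob', -⟩ := hS'
    by_contra hne
    have hP : P ≠ [] := by rintro rfl; simp at hne
    obtain hnil | ⟨P', a, rfl⟩ := P.eq_nil_or_concat
    · exact hP hnil
    have hlenPS : (P'.concat a ++ S).length = P'.length + 1 + S.length := by
      simp
      omega
    have hq1 : P'.length + (S.length + 1) ≤ q := by omega
    have hsplit : matchProb π q (P'.concat a ++ S)
        = matchProb π (q - (S.length + 1)) P' * matchProb π q (a :: S) := by
      have : P'.concat a ++ S = P' ++ (a :: S) := by simp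
      rw [this, matchProb_append π q P' (a :: S) (by simp only [List.length_cons]; omega)]
      rfl
    have hSlt : S.length < q := by omega
    have hc0 : 0 ≤ matchProb π (q - (S.length + 1)) P' :=
      matchProb_nonneg π (q - (S.length + 1))
        (fun i h1 h2 a => hnonneg i h1 (by omega) a) P' (by omega)
    have hc1 : matchProb π (q - (S.length + 1)) P' ≤ 1 :=
      matchProb_le_one π (q - (S.length + 1))
        (fun i h1 h2 a => hnonneg i h1 (by omega) a)
        (fun i h1 h2 => hsum i h1 (by omega)) P' (by omega)
    have haS : 0 ≤ matchProb π q (a :: S) :=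
      matchProb_nonneg π q hnonneg (a :: S) (by simpa using hSlt)
    have hge : 1 / (2 * z) ≤ matchProb π q (a :: S) := by
      calc 1 / (2 * z) ≤ matchProb π q (P'.concat a ++ S) := hprob'
        _ = matchProb π (q - (S.length + 1)) P' * matchProb π q (a :: S) := hsplit
        _ ≤ 1 * matchProb π q (a :: S) := mul_le_mul_of_nonneg_right hc1 haS
        _ = matchProb π q (a :: S) := one_mul _
    rcases hmax with hq | hmax
    · omega
    · exact absurd hge (not_le.mpr (hmax a))
  -- the extension sets
  let ext : List A → Finset (List A) :=
    fun S => Finset.image (fun f : Fin (q - S.length) → A => List.ofFn f ++ S) Finset.univ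
  have hinj : ∀ S : List A,
      Function.Injective (fun f : Fin (q - S.length) → A => List.ofFn f ++ S) := by
    intro S f g h
    exact List.ofFn_injective (List.append_left_injective S h)
  have key1 : ∀ S ∈ MF, ∑ W ∈ ext S, matchProb π q W = matchProb π q S := by
    intro S hS
    have hlen : S.length ≤ q := ((hmem S).mp hS).1
    rw [Finset.sum_image (fun f _ g _ h => hinj S h)]
    have : ∀ f : Fin (q - S.length) → A,
        matchProb π q (List.ofFn f ++ S)
          = matchProb π (q - S.length) (List.ofFn f) * matchProb π q S := by
      intro f
      exact matchProb_append π q _ S (by simp; omega)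
    simp only [this]
    rw [← Finset.sum_mul, sum_matchProb_ofFn π (q - S.length)
      (fun i h1 h2 => hsum i h1 (by omega)), one_mul]
  -- extension sets of distinct suffixes are disjoint
  have hdisj : ∀ S ∈ MF, ∀ S' ∈ MF, S ≠ S' → Disjoint (ext S) (ext S') := by
    intro S hS S' hS' hne
    rw [Finset.disjoint_left]
    intro W hW hW'
    simp only [ext, Finset.mem_image, Finset.mem_univ, true_and] at hW hW'
    obtain ⟨f, rfl⟩ := hW
    obtain ⟨g, hg⟩ := hW'
    have h1 : S <:+ List.ofFn f ++ S := ⟨List.ofFn f, rfl⟩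
    have h2 : S' <:+ List.ofFn f ++ S := ⟨List.ofFn g, hg⟩
    rcases List.suffix_or_suffix_of_suffix h1 h2 with h | h
    · exact hne (anti S hS S' hS' h)
    · exact hne (anti S' hS' S hS h).symm
  -- all extensions live among full-length strings
  let allQ : Finset (List A) := Finset.image (fun f : Fin q → A => List.ofFn f) Finset.univ
  have hsub : MF.biUnion ext ⊆ allQ := by
    intro W hW
    rw [Finset.mem_biUnion] at hW
    obtain ⟨S, hS, hWS⟩ := hW
    simp only [ext, Finset.mem_image, Finset.mem_univ, true_and] at hWS
    obtain ⟨f, rfl⟩ := hWS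
    have hlen : S.length ≤ q := ((hmem S).mp hS).1
    have hWq : (List.ofFn f ++ S).length = q := by simp; omega
    simp only [allQ, Finset.mem_image, Finset.mem_univ, true_and]
    refine ⟨fun i => (List.ofFn f ++ S).get (Fin.cast hWq.symm i), ?_⟩
    apply List.ext_get
    · simp [hWq]
    · intro n h1 h2
      simp [List.get_ofFn]
  have hallQ_len : ∀ W ∈ allQ, W.length = q := by
    intro W hW
    simp only [allQ, Finset.mem_image, Finset.mem_univ, true_and] at hW
    obtain ⟨f, rfl⟩ := hW
    simp
  have hallQ_sum : ∑ W ∈ allQ, matchProb π q W = 1 := by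
    rw [Finset.sum_image (fun f _ g _ h => List.ofFn_injective h)]
    exact sum_matchProb_ofFn π q hsum
  -- main chain of inequalities
  have hsum_le : ∑ S ∈ MF, matchProb π q S ≤ 1 := by
    calc ∑ S ∈ MF, matchProb π q S
        = ∑ S ∈ MF, ∑ W ∈ ext S, matchProb π q W :=
          Finset.sum_congr rfl (fun S hS => (key1 S hS).symm)
      _ = ∑ W ∈ MF.biUnion ext, matchProb π q W :=
          (Finset.sum_biUnion (fun S hS S' hS' hne => hdisj S hS S' hS' hne)).symm
      _ ≤ ∑ W ∈ allQ, matchProb π q W := by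
          apply Finset.sum_le_sum_of_subset_of_nonneg hsub
          intro W hW _
          exact matchProb_nonneg π q hnonneg W (le_of_eq (hallQ_len W hW))
      _ = 1 := hallQ_sum
  have hlb : (MF.card : ℝ) * (1 / (2 * z)) ≤ ∑ S ∈ MF, matchProb π q S := by
    have := Finset.card_nsmul_le_sum MF (matchProb π q) (1 / (2 * z))
      (fun S hS => ((hmem S).mp hS).2.1)
    simpa [nsmul_eq_mul] using this
  have hcard : (MF.card : ℝ) ≤ 2 * z := by
    have h1 : (MF.card : ℝ) * (1 / (2 * z)) ≤ 1 := le_trans hlb hsum_le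
    rw [mul_one_div, div_le_one hz0] at h1
    exact h1
  rwa [Set.ncard_eq_toFinset_card _ hfin]
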